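/- Let 1 ≤ p ≤ 2, let H be a real Hilbert space, and let α > 0. Suppose T : ℓ_p → H is large-scale Lipschitz, i.e. there exist A > 0 and B ≥ 0 with ‖T(x) − T(y)‖_H ≤ A·‖x − y‖_p + B for all x, y ∈ ℓ_p, and suppose there exist constants C, t > 0 such that ‖T(x) − T(y)‖_H ≥ C·‖x − y‖_p^α whenever ‖x − y‖_p ≥ t. Then α ≤ p/2. In particular, the Hilbert space compression exponent of ℓ_p is at most p/2. -/

import Mathlib

variable {H : Type} [NormedAddCommGroup H] [InnerProductSpace ℝ H]

lemma quad_ineq (a b c d : H) :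
    ‖a - c‖^2 + ‖b - d‖^2 ≤ ‖a - b‖^2 + ‖b - c‖^2 + ‖c - d‖^2 + ‖d - a‖^2 := by
  have key : ‖(a - b) + (c - d)‖^2 =
      (‖a - b‖^2 + ‖b - c‖^2 + ‖c - d‖^2 + ‖d - a‖^2) - (‖a - c‖^2 + ‖b - d‖^2) := by
    have h1 := norm_add_sq_real (a - b) (c - d)
    have h2 := norm_sub_sq_real a b
    have h3 := norm_sub_sq_real b c
    have h4 := norm_sub_sq_real c d
    have h5 := norm_sub_sq_real d a
    have h6 := norm_sub_sq_real a c
    have h7 := norm_sub_sq_real b d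
    rw [h1, h2, h3, h4, h5, h6, h7]
    simp only [inner_sub_left, inner_sub_right, real_inner_comm]
    ring_nf
  nlinarith [sq_nonneg ‖(a - b) + (c - d)‖]

/-- Enflo's inequality: in a Hilbert space, the sum of squared diagonals of a cube
is at most the sum of squared edges. -/
lemma enflo_cube : ∀ (n : ℕ) (f : (Fin n → Bool) → H),
    ∑ x : Fin n → Bool, ‖f x - f (fun i => !(x i))‖^2
      ≤ ∑ x : Fin n → Bool, ∑ i : Fin n, ‖f x - f (Function.update x i (!(x i)))‖^2 := by
  intro n
  induction n with
  | zero =>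
    intro f
    have : ∀ x : Fin 0 → Bool, (fun i => !(x i)) = x := by
      intro x; funext i; exact i.elim0
    simp [this]
  | succ n ih =>
    intro f
    -- reindex sums over the cube of dimension n+1 via Fin.cons
    have reindex : ∀ (F : (Fin (n+1) → Bool) → ℝ),
        ∑ x : Fin (n+1) → Bool, F x = ∑ b : Bool, ∑ y : Fin n → Bool, F (Fin.cons b y) := by
      intro F
      rw [← (Fintype.sum_equiv (Fin.consEquiv (fun _ : Fin (n+1) => Bool))
        (fun z : Bool × (Fin n → Bool) => F (Fin.cons z.1 z.2)) F (fun z => rfl)),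
        Fintype.sum_prod_type]
    have hcomp : ∀ (b : Bool) (y : Fin n → Bool),
        (fun i => !(Fin.cons (α := fun _ => Bool) b y i)) = Fin.cons (α := fun _ => Bool) (!b) (fun i => !(y i)) := by
      intro b y; funext i
      refine Fin.cases ?_ ?_ i <;> simp
    set N : (Fin n → Bool) → (Fin n → Bool) := fun y i => !(y i) with hN
    set g : Bool → (Fin n → Bool) → H := fun b y => f (Fin.cons b y) with hg
    have hNinv : Function.Involutive N := by
      intro y; funext i; simp [hN]
    have hsumN : ∀ (F : (Fin n → Bool) → ℝ), ∑ y : Fin n → Bool, F (N y) = ∑ y : Fin n → Bool, F y :=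
      fun F => Equiv.sum_comp (hNinv.toPerm N) F
    have hupd0 : ∀ (b : Bool) (y : Fin n → Bool),
        Function.update (Fin.cons (α := fun _ => Bool) b y) 0 (!(Fin.cons (α := fun _ => Bool) b y 0))
          = Fin.cons (!b) y := by
      intro b y
      rw [Fin.cons_zero, Fin.update_cons_zero]
    have hupds : ∀ (b : Bool) (y : Fin n → Bool) (j : Fin n),
        Function.update (Fin.cons (α := fun _ => Bool) b y) j.succ
            (!(Fin.cons (α := fun _ => Bool) b y j.succ))
          = Fin.cons b (Function.update y j (!(y j))) := by
      intro b y j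
      rw [Fin.cons_succ, ← Fin.cons_update]
    -- Left-hand side rewritten over the two faces
    have hLHS : ∑ x : Fin (n+1) → Bool, ‖f x - f (fun i => !(x i))‖^2
        = (∑ y : Fin n → Bool, ‖g true y - g false (N y)‖^2)
          + ∑ y : Fin n → Bool, ‖g false y - g true (N y)‖^2 := by
      rw [reindex (fun x => ‖f x - f (fun i => !(x i))‖^2)]
      simp only [hcomp]
      rw [Fintype.sum_bool]
      simp [hg, hN]
    -- Right-hand side rewritten
    have hRHS : ∑ x : Fin (n+1) → Bool, ∑ i : Fin (n+1), ‖f x - f (Function.update x i (!(x i)))‖^2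
        = ((∑ y : Fin n → Bool, ‖g true y - g false y‖^2)
            + ∑ y : Fin n → Bool, ‖g false y - g true y‖^2)
          + ((∑ y : Fin n → Bool, ∑ j : Fin n, ‖g true y - g true (Function.update y j (!(y j)))‖^2)
            + ∑ y : Fin n → Bool, ∑ j : Fin n, ‖g false y - g false (Function.update y j (!(y j)))‖^2) := by
      rw [reindex (fun x => ∑ i : Fin (n+1), ‖f x - f (Function.update x i (!(x i)))‖^2)]
      have : ∀ (b : Bool) (y : Fin n → Bool),
          ∑ i : Fin (n+1), ‖f (Fin.cons b y) - f (Function.update (Fin.cons (α := fun _ => Bool) b y) i (!(Fin.cons (α := fun _ => Bool) b y i)))‖^2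
            = ‖g b y - g (!b) y‖^2
              + ∑ j : Fin n, ‖g b y - g b (Function.update y j (!(y j)))‖^2 := by
        intro b y
        rw [Fin.sum_univ_succ, hupd0]
        congr 1
        refine Finset.sum_congr rfl (fun j _ => ?_)
        rw [hupds]
      simp only [this]
      rw [Fintype.sum_bool]
      rw [Finset.sum_add_distrib, Finset.sum_add_distrib]
      simp only [Bool.not_true, Bool.not_false]
      ring
    -- the quadrilateral inequality on each pair of antipodal vertical fibers
    have main : ∀ y : Fin n → Bool,
        ‖g true y - g false (N y)‖^2 + ‖g false y - g true (N y)‖^2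
          ≤ (‖g false y - g false (N y)‖^2 + ‖g true y - g true (N y)‖^2)
            + (‖g false (N y) - g true (N y)‖^2 + ‖g false y - g true y‖^2) := by
      intro y
      have hq := quad_ineq (g false y) (g false (N y)) (g true (N y)) (g true y)
      have e1 : ‖g false (N y) - g true y‖ = ‖g true y - g false (N y)‖ := norm_sub_rev _ _
      have e2 : ‖g true (N y) - g true y‖ = ‖g true y - g true (N y)‖ := norm_sub_rev _ _
      have e3 : ‖g true y - g false y‖ = ‖g false y - g true y‖ := norm_sub_rev _ _
      rw [e1, e2, e3] at hq
      linarith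
    calc ∑ x : Fin (n+1) → Bool, ‖f x - f (fun i => !(x i))‖^2
        = (∑ y : Fin n → Bool, ‖g true y - g false (N y)‖^2)
          + ∑ y : Fin n → Bool, ‖g false y - g true (N y)‖^2 := hLHS
      _ = ∑ y : Fin n → Bool,
            (‖g true y - g false (N y)‖^2 + ‖g false y - g true (N y)‖^2) := by
          rw [Finset.sum_add_distrib]
      _ ≤ ∑ y : Fin n → Bool,
            ((‖g false y - g false (N y)‖^2 + ‖g true y - g true (N y)‖^2)
              + (‖g false (N y) - g true (N y)‖^2 + ‖g false y - g true y‖^2)) :=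
          Finset.sum_le_sum (fun y _ => main y)
      _ = ((∑ y : Fin n → Bool, ‖g false y - g false (N y)‖^2)
            + ∑ y : Fin n → Bool, ‖g true y - g true (N y)‖^2)
          + ((∑ y : Fin n → Bool, ‖g false (N y) - g true (N y)‖^2)
            + ∑ y : Fin n → Bool, ‖g false y - g true y‖^2) := by
          rw [Finset.sum_add_distrib, Finset.sum_add_distrib, Finset.sum_add_distrib]
      _ = ((∑ y : Fin n → Bool, ‖g false y - g false (N y)‖^2)
            + ∑ y : Fin n → Bool, ‖g true y - g true (N y)‖^2)
          + ((∑ y : Fin n → Bool, ‖g false y - g true y‖^2)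
            + ∑ y : Fin n → Bool, ‖g false y - g true y‖^2) := by
          rw [hsumN (fun y => ‖g false y - g true y‖^2)]
      _ ≤ ((∑ y : Fin n → Bool, ∑ j : Fin n, ‖g false y - g false (Function.update y j (!(y j)))‖^2)
            + ∑ y : Fin n → Bool, ∑ j : Fin n, ‖g true y - g true (Function.update y j (!(y j)))‖^2)
          + ((∑ y : Fin n → Bool, ‖g false y - g true y‖^2)
            + ∑ y : Fin n → Bool, ‖g false y - g true y‖^2) := by
          have hb := ih (g false)
          have htop := ih (g true)
          simp only [hN] at *
          linarith
      _ = ∑ x : Fin (n+1) → Bool, ∑ i : Fin (n+1), ‖f x - f (Function.update x i (!(x i)))‖^2 := by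
          rw [hRHS]
          have e3 : ∀ y : Fin n → Bool, ‖g true y - g false y‖ = ‖g false y - g true y‖ :=
            fun y => norm_sub_rev _ _
          simp only [e3]
          ring


lemma lp_single_sub (p : ENNReal) (i : ℕ) (a b : ℝ) :
    (lp.single p i (a - b) : lp (fun _ : ℕ => ℝ) p)
      = lp.single p i a - lp.single p i b := by
  refine lp.ext (funext fun j => ?_)
  by_cases h : j = i
  · subst h
    simp [lp.single_apply_self]
  · simp [lp.single_apply_ne p i _ h]

/-- the scaled cube point: coordinates `t` on the coordinates where `y` is true. -/
noncomputable def cubePt (p t : ℝ) (n : ℕ) (y : Fin n → Bool) :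
    lp (fun _ : ℕ => ℝ) (ENNReal.ofReal p) :=
  ∑ i ∈ Finset.range n, lp.single (ENNReal.ofReal p) i
    (if h : i < n then (if y ⟨i, h⟩ then t else 0) else 0)

lemma cubePt_dist_pow (p : ℝ) (hp1 : 1 ≤ p) (t : ℝ) (ht : 0 < t)
    (n : ℕ) (y y' : Fin n → Bool) :
    ‖cubePt p t n y - cubePt p t n y'‖ ^ p
      = ((Finset.univ.filter (fun i => y i ≠ y' i)).card : ℝ) * t ^ p := by
  have hp0 : (0:ℝ) < p := lt_of_lt_of_le one_pos hp1
  have htop : (ENNReal.ofReal p).toReal = p := ENNReal.toReal_ofReal hp0.le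
  have hppos : 0 < (ENNReal.ofReal p).toReal := by rw [htop]; exact hp0
  set v : (Fin n → Bool) → ℕ → ℝ :=
    fun z i => if h : i < n then (if z ⟨i, h⟩ then t else 0) else 0 with hv
  have hdiff : cubePt p t n y - cubePt p t n y'
      = ∑ i ∈ Finset.range n, lp.single (ENNReal.ofReal p) i (v y i - v y' i) := by
    rw [cubePt, cubePt, ← Finset.sum_sub_distrib]
    exact Finset.sum_congr rfl (fun i _ => (lp_single_sub _ i _ _).symm)
  rw [hdiff]
  have hnorm := lp.norm_sum_single hppos (fun i => v y i - v y' i) (Finset.range n)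
  rw [htop] at hnorm
  rw [hnorm, ← Fin.sum_univ_eq_sum_range (fun i => ‖v y i - v y' i‖ ^ p) n]
  have hterm : ∀ i : Fin n,
      ‖v y i - v y' i‖ ^ p = if y i ≠ y' i then t ^ p else 0 := by
    intro i
    have hin : (i : ℕ) < n := i.isLt
    simp only [hv, dif_pos hin, Fin.eta]
    cases hy : y i <;> cases hy' : y' i <;>
      simp [Real.zero_rpow hp0.ne', Real.norm_eq_abs, abs_of_pos ht]
  rw [Finset.sum_congr rfl (fun i _ => hterm i), Finset.sum_ite, Finset.sum_const,
    Finset.sum_const_zero, add_zero, nsmul_eq_mul]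

lemma rpow_cancel {a c p : ℝ} (hp : p ≠ 0) (ha : 0 ≤ a) (hc : 0 ≤ c)
    (h : a ^ p = c ^ p) : a = c :=
  Real.rpow_left_injOn hp ha hc h

lemma cubePt_dist_update (p : ℝ) (hp1 : 1 ≤ p) (t : ℝ) (ht : 0 < t)
    (n : ℕ) (y : Fin n → Bool) (j : Fin n) :
    ‖cubePt p t n y - cubePt p t n (Function.update y j (!(y j)))‖ = t := by
  have hp0 : (0:ℝ) < p := lt_of_lt_of_le one_pos hp1
  have hcard : (Finset.univ.filter
      (fun i => y i ≠ Function.update y j (!(y j)) i)) = {j} := by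
    ext i
    by_cases h : i = j
    · subst h
      simp [Function.update_self]
    · simp [Function.update_of_ne h, h]
  refine rpow_cancel hp0.ne' (lp.norm_nonneg' _) ht.le ?_
  rw [cubePt_dist_pow p hp1 t ht, hcard]
  simp

lemma cubePt_dist_compl (p : ℝ) (hp1 : 1 ≤ p) (t : ℝ) (ht : 0 < t)
    (n : ℕ) (y : Fin n → Bool) :
    ‖cubePt p t n y - cubePt p t n (fun i => !(y i))‖ = t * (n : ℝ) ^ (1/p) := by
  have hp0 : (0:ℝ) < p := lt_of_lt_of_le one_pos hp1
  have hcard : (Finset.univ.filter (fun i : Fin n => y i ≠ !(y i))) = Finset.univ := by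
    ext i; simp
  refine rpow_cancel hp0.ne' (lp.norm_nonneg' _) ?_ ?_
  · positivity
  rw [cubePt_dist_pow p hp1 t ht, hcard]
  rw [Real.mul_rpow ht.le (by positivity), ← Real.rpow_mul (Nat.cast_nonneg n),
    one_div_mul_cancel hp0.ne', Real.rpow_one, Finset.card_univ, Fintype.card_fin, mul_comm]


/-- For `1 ≤ p ≤ 2`, a real Hilbert space `H`, and `α > 0`: if
`T : ℓ_p → H` is large-scale Lipschitz (`‖T x - T y‖ ≤ A·‖x-y‖_p + B`) and satisfies
`‖T x - T y‖ ≥ C·‖x-y‖_p^α` whenever `‖x-y‖_p ≥ t` (for some `C, t > 0`), then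
`α ≤ p/2`. In particular the Hilbert space compression exponent of `ℓ_p` is at
most `p/2`. -/
theorem lp_compression_upper_bound
    (p : ℝ) (hp1 : 1 ≤ p) (hp2 : p ≤ 2)
    (H : Type) [NormedAddCommGroup H] [InnerProductSpace ℝ H] [CompleteSpace H]
    (α : ℝ) (hα : 0 < α)
    (T : lp (fun _ : ℕ => ℝ) (ENNReal.ofReal p) → H)
    (A B : ℝ) (hA : 0 < A) (hB : 0 ≤ B)
    (hT_up : ∀ x y : lp (fun _ : ℕ => ℝ) (ENNReal.ofReal p),
      ‖T x - T y‖ ≤ A * ‖x - y‖ + B)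
    (C t : ℝ) (hC : 0 < C) (ht : 0 < t)
    (hT_low : ∀ x y : lp (fun _ : ℕ => ℝ) (ENNReal.ofReal p),
      t ≤ ‖x - y‖ → C * ‖x - y‖ ^ α ≤ ‖T x - T y‖) :
    α ≤ p / 2 := by
  by_contra hcon
  push_neg at hcon
  have hp0 : (0:ℝ) < p := lt_of_lt_of_le one_pos hp1
  set E : ℝ := (A * t + B)^2 with hE
  have hE0 : 0 ≤ E := sq_nonneg _
  have hAtB : 0 ≤ A * t + B := by positivity
  have sq_rpow : ∀ (x r : ℝ), 0 ≤ x → (x ^ r)^2 = x ^ (r * 2) := by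
    intro x r hx
    rw [← Real.rpow_natCast (x ^ r) 2, ← Real.rpow_mul hx]
    norm_num
  have key : ∀ n : ℕ, 1 ≤ n →
      C^2 * t ^ (α * 2) * (n:ℝ) ^ (α / p * 2) ≤ (n:ℝ) * E := by
    intro n hn
    have hn1 : (1:ℝ) ≤ (n:ℝ) := by exact_mod_cast hn
    have hnn : (0:ℝ) ≤ (n:ℝ) := by linarith
    have henflo := enflo_cube n (fun y => T (cubePt p t n y))
    -- lower bound for the diagonal terms
    have hlow : ∀ y : Fin n → Bool,
        (C * (t * (n:ℝ) ^ (1/p)) ^ α)^2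
          ≤ ‖T (cubePt p t n y) - T (cubePt p t n (fun i => !(y i)))‖^2 := by
      intro y
      have hd := cubePt_dist_compl p hp1 t ht n y
      have hs : t ≤ t * (n:ℝ) ^ (1/p) := by
        have h1 : (1:ℝ) ≤ (n:ℝ) ^ (1/p) := Real.one_le_rpow hn1 (by positivity)
        nlinarith
      have hlb := hT_low _ _ (by rw [hd]; exact hs)
      rw [hd] at hlb
      have h0 : 0 ≤ C * (t * (n:ℝ) ^ (1/p)) ^ α := by positivity
      exact pow_le_pow_left₀ h0 hlb 2
    -- upper bound for the edge terms
    have hup : ∀ (y : Fin n → Bool) (j : Fin n),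
        ‖T (cubePt p t n y) - T (cubePt p t n (Function.update y j (!(y j))))‖^2
          ≤ E := by
      intro y j
      have hu := hT_up (cubePt p t n y) (cubePt p t n (Function.update y j (!(y j))))
      rw [cubePt_dist_update p hp1 t ht n y j] at hu
      exact pow_le_pow_left₀ (norm_nonneg _) hu 2
    have hcardcube : (Fintype.card (Fin n → Bool) : ℝ) = 2^n := by
      simp [Fintype.card_fun]
    have hL : (2^n : ℝ) * (C * (t * (n:ℝ) ^ (1/p)) ^ α)^2
        ≤ ∑ x : Fin n → Bool,
            ‖T (cubePt p t n x) - T (cubePt p t n (fun i => !(x i)))‖^2 := by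
      have := Finset.sum_le_sum (fun y (_ : y ∈ Finset.univ) => hlow y)
      rw [Finset.sum_const, Finset.card_univ, nsmul_eq_mul] at this
      rw [← hcardcube]
      exact_mod_cast this
    have hR : (∑ x : Fin n → Bool, ∑ i : Fin n,
          ‖T (cubePt p t n x) - T (cubePt p t n (Function.update x i (!(x i))))‖^2)
        ≤ (2^n : ℝ) * ((n:ℝ) * E) := by
      have step : ∀ y : Fin n → Bool,
          (∑ i : Fin n,
            ‖T (cubePt p t n y) - T (cubePt p t n (Function.update y i (!(y i))))‖^2)
            ≤ (n:ℝ) * E := by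
        intro y
        have := Finset.sum_le_sum (fun j (_ : j ∈ Finset.univ) => hup y j)
        rwa [Finset.sum_const, Finset.card_univ, Fintype.card_fin, nsmul_eq_mul] at this
      have := Finset.sum_le_sum (fun y (_ : y ∈ Finset.univ) => step y)
      rw [Finset.sum_const, Finset.card_univ, nsmul_eq_mul] at this
      rw [← hcardcube]
      exact_mod_cast this
    have hchain := le_trans hL (le_trans henflo hR)
    have h2n : (0:ℝ) < 2^n := by positivity
    have hcanc : (C * (t * (n:ℝ) ^ (1/p)) ^ α)^2 ≤ (n:ℝ) * E :=
      le_of_mul_le_mul_left (by linarith [hchain]) h2n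
    -- expand the left side
    have hexp : (C * (t * (n:ℝ) ^ (1/p)) ^ α)^2
        = C^2 * t ^ (α * 2) * (n:ℝ) ^ (α / p * 2) := by
      rw [Real.mul_rpow ht.le (by positivity : (0:ℝ) ≤ (n:ℝ) ^ (1/p))]
      rw [← Real.rpow_mul hnn (1/p) α]
      rw [mul_pow, mul_pow, sq_rpow t α ht.le, sq_rpow _ _ hnn]
      rw [show (1/p * α) * 2 = α / p * 2 by ring]
      ring
    rw [hexp] at hcanc
    exact hcanc
  -- derive the contradiction
  set β : ℝ := α / p * 2 - 1 with hβ
  have hβ0 : 0 < β := by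
    rw [hβ]
    have : 1 < α / p * 2 := by
      rw [show α / p * 2 = α * 2 / p by ring, lt_div_iff₀ hp0]
      linarith
    linarith
  set D : ℝ := C^2 * t ^ (α * 2) with hD
  have hD0 : 0 < D := by positivity
  set K : ℝ := E / D with hK
  have hK0 : 0 ≤ K := div_nonneg hE0 hD0.le
  have bound : ∀ n : ℕ, 1 ≤ n → (n:ℝ) ^ β ≤ K := by
    intro n hn
    have hn1 : (1:ℝ) ≤ (n:ℝ) := by exact_mod_cast hn
    have hnpos : (0:ℝ) < (n:ℝ) := by linarith
    have hk := key n hn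
    have hsplit : (n:ℝ) ^ β * (n:ℝ) = (n:ℝ) ^ (α / p * 2) := by
      have h := (Real.rpow_add hnpos β 1).symm
      rw [Real.rpow_one] at h
      rw [h]
      congr 1
      rw [hβ]; ring
    rw [← hsplit] at hk
    have : D * (n:ℝ) ^ β ≤ E := by
      have := (mul_le_mul_iff_of_pos_right hnpos).mp (by linarith [hk] : D * (n:ℝ)^β * (n:ℝ) ≤ E * (n:ℝ))
      exact this
    rw [hK, le_div_iff₀ hD0]
    linarith
  obtain ⟨N, hN⟩ := exists_nat_gt (max 1 (K ^ (1/β)))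
  have hN1 : 1 ≤ N := by
    have h1 : (1:ℝ) < (N:ℝ) := lt_of_le_of_lt (le_max_left _ _) hN
    exact_mod_cast h1.le
  have hKN : K ^ (1/β) < (N:ℝ) := lt_of_le_of_lt (le_max_right _ _) hN
  have hgt : K < (N:ℝ) ^ β := by
    have := Real.rpow_lt_rpow (Real.rpow_nonneg hK0 _) hKN hβ0
    rwa [← Real.rpow_mul hK0, one_div_mul_cancel hβ0.ne', Real.rpow_one] at this
  exact absurd (bound N hN1) (not_le.mpr hgt)
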